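/- arXiv:2504.16336 — 2 statements merged into one kernel-verified Lean document; each statement's English description precedes it below -/
import Mathlib

section
/- Let f : ℂ → ℂ be holomorphic on the open unit disk 𝔻 = {z ∈ ℂ : |z| < 1} with Re f(z) > 0 for every z ∈ 𝔻, and suppose that equality |f′(z₀)| · (1 − |z₀|²) = 2 Re f(z₀) holds in the Harnack gradient inequality at some point z₀ ∈ 𝔻. Then there exist m ∈ ℂ with |m| = 1 and a constant C > 0 such that Re f(z) = C · (1 − |z|²)/|m − z|² for every z ∈ 𝔻; that is, the positive harmonic function h = Re f is a positive multiple of the Poisson kernel of 𝔻 with pole m. (This is the rigidity lemma [AMN, Lemma 2.3] which the paper uses in its proof of Theorem 1.2: a positive harmonic function on 𝔻 whose hyperbolic gradient of log h attains norm 1 at one point must be a multiple of a Poisson kernel.) -/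
open Complex Metric

lemma one_add_small_ne (w : ℂ) (hw : ‖w‖ < 1) : (1 : ℂ) + w ≠ 0 := by
  intro h
  have : w = -1 := by linear_combination h
  rw [this] at hw; norm_num at hw

lemma key_normSq (w z : ℂ) :
    normSq (1 + (starRingEnd ℂ) w * z) - normSq (z + w)
      = (1 - normSq w) * (1 - normSq z) := by
  simp [Complex.normSq_apply, Complex.add_re, Complex.add_im, Complex.mul_re,
    Complex.mul_im, Complex.conj_re, Complex.conj_im]
  ring

lemma normSq_lt_one_iff' (z : ℂ) : normSq z < 1 ↔ ‖z‖ < 1 := by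
  rw [← Complex.sq_norm]
  constructor
  · intro h; nlinarith [norm_nonneg z]
  · intro h; nlinarith [norm_nonneg z]

lemma conj_small_mul (w z : ℂ) (hw : ‖w‖ < 1) (hz : ‖z‖ < 1) :
    ‖(starRingEnd ℂ) w * z‖ < 1 := by
  rw [norm_mul, Complex.norm_conj]
  nlinarith [norm_nonneg w, norm_nonneg z]

lemma mobius_maps (w z : ℂ) (hw : ‖w‖ < 1) (hz : ‖z‖ < 1) :
    ‖(z + w) / (1 + (starRingEnd ℂ) w * z)‖ < 1 := by
  have hden := one_add_small_ne _ (conj_small_mul w z hw hz)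
  rw [norm_div, div_lt_one (norm_pos_iff.mpr hden)]
  have h1 : normSq w < 1 := (normSq_lt_one_iff' w).mpr hw
  have h2 : normSq z < 1 := (normSq_lt_one_iff' z).mpr hz
  have hk := key_normSq w z
  have : normSq (z + w) < normSq (1 + (starRingEnd ℂ) w * z) := by nlinarith
  have h3 : ‖z + w‖ ^ 2 < ‖1 + (starRingEnd ℂ) w * z‖ ^ 2 := by
    rwa [← Complex.sq_norm, ← Complex.sq_norm] at this
  nlinarith [norm_nonneg (z + w), norm_nonneg (1 + (starRingEnd ℂ) w * z)]

lemma cayley_ne (w a : ℂ) (hw : 0 < w.re) (ha : 0 < a.re) :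
    w + (starRingEnd ℂ) a ≠ 0 := by
  intro h
  have : (w + (starRingEnd ℂ) a).re = 0 := by rw [h]; simp
  simp [Complex.add_re, Complex.conj_re] at this
  linarith

lemma cayley_maps (w a : ℂ) (hw : 0 < w.re) (ha : 0 < a.re) :
    ‖(w - a) / (w + (starRingEnd ℂ) a)‖ < 1 := by
  have hden := cayley_ne w a hw ha
  rw [norm_div, div_lt_one (norm_pos_iff.mpr hden)]
  have hk : normSq (w + (starRingEnd ℂ) a) - normSq (w - a) = 4 * w.re * a.re := by
    simp [Complex.normSq_apply]; ring
  have h3 : ‖w - a‖ ^ 2 < ‖w + (starRingEnd ℂ) a‖ ^ 2 := by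
    have h4 : normSq (w - a) < normSq (w + (starRingEnd ℂ) a) := by nlinarith
    rwa [← Complex.sq_norm, ← Complex.sq_norm] at h4
  nlinarith [norm_nonneg (w - a), norm_nonneg (w + (starRingEnd ℂ) a)]

set_option maxHeartbeats 1600000 in
/-- Rigidity in the Harnack gradient inequality: if `f` is holomorphic on the open
unit disk with positive real part and `|f'(z₀)| * (1 - |z₀|²) = 2 * Re f(z₀)` at some
point `z₀` of the disk, then `Re f` is a positive multiple of a Poisson kernel:
`Re f(z) = C * (1 - |z|²) / |m - z|²` for some `|m| = 1` and `C > 0`. -/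
theorem harnack_equality_rigidity
    (f : ℂ → ℂ) (hf : DifferentiableOn ℂ f (Metric.ball 0 1))
    (hre : ∀ z ∈ Metric.ball (0 : ℂ) 1, 0 < (f z).re)
    (z₀ : ℂ) (hz₀ : z₀ ∈ Metric.ball (0 : ℂ) 1)
    (heq : ‖deriv f z₀‖ * (1 - ‖z₀‖ ^ 2) = 2 * (f z₀).re) :
    ∃ m : ℂ, ‖m‖ = 1 ∧ ∃ C : ℝ, 0 < C ∧
      ∀ z ∈ Metric.ball (0 : ℂ) 1,
        (f z).re = C * (1 - ‖z‖ ^ 2) / ‖m - z‖ ^ 2 := by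
  have hz₀lt : ‖z₀‖ < 1 := mem_ball_zero_iff.mp hz₀
  set a := f z₀ with ha_def
  have ha : 0 < a.re := hre z₀ hz₀
  set φ : ℂ → ℂ := fun z => (z + z₀) / (1 + (starRingEnd ℂ) z₀ * z) with hφ_def
  have hφmem : ∀ z ∈ ball (0 : ℂ) 1, φ z ∈ ball (0 : ℂ) 1 := fun z hz =>
    mem_ball_zero_iff.mpr (mobius_maps z₀ z hz₀lt (mem_ball_zero_iff.mp hz))
  have hφdiff : DifferentiableOn ℂ φ (ball (0 : ℂ) 1) := by
    apply DifferentiableOn.div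
    · exact (differentiable_id.add_const z₀).differentiableOn
    · exact ((differentiable_id.const_mul _).const_add 1).differentiableOn
    · exact fun z hz => one_add_small_ne _ (conj_small_mul z₀ z hz₀lt (mem_ball_zero_iff.mp hz))
  set g : ℂ → ℂ := fun z => (f (φ z) - a) / (f (φ z) + (starRingEnd ℂ) a) with hg_def
  have hφ0 : φ 0 = z₀ := by simp [hφ_def]
  have hg0 : g 0 = 0 := by simp [hg_def, hφ0, ← ha_def]
  have hgd : DifferentiableOn ℂ g (ball (0 : ℂ) 1) := by
    have hF : DifferentiableOn ℂ (fun z => f (φ z)) (ball (0 : ℂ) 1) :=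
      hf.comp hφdiff hφmem
    exact (hF.sub_const a).div (hF.add_const _)
      (fun z hz => cayley_ne _ a (hre _ (hφmem z hz)) ha)
  have hgmaps : Set.MapsTo g (ball (0 : ℂ) 1) (ball (g 0) 1) := by
    intro z hz
    rw [hg0, mem_ball_zero_iff]
    exact cayley_maps _ a (hre _ (hφmem z hz)) ha
  -- derivative of φ at 0
  have hφd : HasDerivAt φ (((1 - normSq z₀ : ℝ) : ℂ)) 0 := by
    have h1 : HasDerivAt (fun z : ℂ => z + z₀) 1 0 := (hasDerivAt_id 0).add_const z₀
    have h2 : HasDerivAt (fun z : ℂ => 1 + (starRingEnd ℂ) z₀ * z) ((starRingEnd ℂ) z₀) 0 := by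
      simpa using (((hasDerivAt_id 0).const_mul ((starRingEnd ℂ) z₀)).const_add 1)
    have hne : (1 : ℂ) + (starRingEnd ℂ) z₀ * 0 ≠ 0 := by simp
    have := h1.div h2 hne
    refine this.congr_deriv (Eq.symm ?_)
    have : z₀ * (starRingEnd ℂ) z₀ = ((normSq z₀ : ℝ) : ℂ) := Complex.mul_conj z₀
    push_cast
    simp only [mul_zero, add_zero, zero_add, one_pow, div_one, one_mul]
    rw [← this]
  have hfd : DifferentiableAt ℂ f z₀ := hf.differentiableAt (isOpen_ball.mem_nhds hz₀)
  have hFd : HasDerivAt (f ∘ φ) (deriv f z₀ * ((1 - normSq z₀ : ℝ) : ℂ)) 0 :=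
    (hφ0 ▸ hfd.hasDerivAt : HasDerivAt f (deriv f z₀) (φ 0)).comp 0 hφd
  have hane : a + (starRingEnd ℂ) a ≠ 0 := by
    rw [Complex.add_conj]
    exact Complex.ofReal_ne_zero.mpr (by positivity)
  have hgd0 : HasDerivAt g
      (deriv f z₀ * ((1 - normSq z₀ : ℝ) : ℂ) / (a + (starRingEnd ℂ) a)) 0 := by
    have hne : (f ∘ φ) 0 + (starRingEnd ℂ) a ≠ 0 := by
      rw [Function.comp_apply, hφ0, ← ha_def]; exact cayley_ne a a ha ha
    have h := (hFd.sub_const a).div (hFd.add_const ((starRingEnd ℂ) a)) hne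
    have hF0 : (f ∘ φ) 0 = a := by rw [Function.comp_apply, hφ0]
    rw [hF0] at h
    refine h.congr_deriv (Eq.symm ?_)
    rw [sub_self, zero_mul, sub_zero, sq]
    rw [mul_div_assoc, mul_div_mul_right _ _ hane, mul_div_assoc]
  have hns : normSq z₀ = ‖z₀‖ ^ 2 := by
    rw [Complex.normSq_eq_norm_sq]
  have hl1n : ‖deriv g 0‖ = 1 := by
    rw [hgd0.deriv, norm_div, norm_mul, Complex.norm_real, Complex.add_conj,
      Complex.norm_real]
    rw [Real.norm_eq_abs, Real.norm_eq_abs,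
      _root_.abs_of_nonneg (by nlinarith [norm_nonneg z₀] : (0:ℝ) ≤ 1 - normSq z₀),
      _root_.abs_of_pos (by linarith : (0:ℝ) < 2 * a.re), hns, heq]
    exact div_self (by positivity)
  -- Schwarz lemma equality case
  have hSch := Complex.affine_of_mapsTo_ball_of_exists_norm_dslope_eq_div hgd (hgmaps.mono_right ball_subset_closedBall)
    (mem_ball_self one_pos) (by rw [dslope_same]; rw [hl1n]; norm_num)
  have hgz : ∀ z ∈ ball (0 : ℂ) 1, g z = z * deriv g 0 := by
    intro z hz
    have := hSch hz
    simpa [hg0, dslope_same, smul_eq_mul] using this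
  set l := deriv g 0 with hl_def
  have hl1 : l * (starRingEnd ℂ) l = 1 := by
    rw [Complex.mul_conj]
    have : normSq l = 1 := by
      rw [Complex.normSq_eq_norm_sq, hl1n]; norm_num
    rw [this]; norm_num
  set α : ℂ := 1 + l * z₀ with hα_def
  set β : ℂ := l + (starRingEnd ℂ) z₀ with hβ_def
  have hβα : β * (starRingEnd ℂ) β = α * (starRingEnd ℂ) α := by
    rw [hα_def, hβ_def]
    simp only [map_add, map_mul, map_one, Complex.conj_conj]
    linear_combination (1 - z₀ * (starRingEnd ℂ) z₀) * hl1
  have hnsβα : normSq β = normSq α := by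
    have := hβα
    rw [Complex.mul_conj, Complex.mul_conj] at this
    exact_mod_cast this
  have hα0 : α ≠ 0 := by
    rw [hα_def]
    apply one_add_small_ne
    rw [norm_mul, hl1n, one_mul]; exact hz₀lt
  have hβ0 : β ≠ 0 := by
    intro h
    apply hα0
    rw [← Complex.normSq_eq_zero] at h ⊢
    rw [← hnsβα]; exact h
  refine ⟨α / β, ?_, a.re * (1 - normSq z₀) / normSq α, ?_, ?_⟩
  · rw [norm_div]
    have : ‖α‖ = ‖β‖ := by
      rw [Complex.norm_def, Complex.norm_def, hnsβα]
    rw [this, div_self (norm_ne_zero_iff.mpr hβ0)]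
  · apply div_pos
    · apply mul_pos ha
      nlinarith [norm_nonneg z₀, (normSq_lt_one_iff' z₀).mpr hz₀lt]
    · exact Complex.normSq_pos.mpr hα0
  intro z hz
  have hzlt : ‖z‖ < 1 := mem_ball_zero_iff.mp hz
  set m : ℂ := α / β with hm_def
  have hβm : β * m = α := by rw [hm_def]; field_simp
  set u : ℂ := 1 - (starRingEnd ℂ) z₀ * z with hu_def
  set v : ℂ := z - z₀ with hv_def
  have hu0 : u ≠ 0 := by
    rw [hu_def, sub_eq_add_neg]
    apply one_add_small_ne
    rw [norm_neg]
    exact conj_small_mul z₀ z hz₀lt hzlt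
  set w : ℂ := v / u with hw_def
  have hwlt : ‖w‖ < 1 := by
    have h1 := mobius_maps (-z₀) z (by rwa [norm_neg]) hzlt
    have h2 : (z + -z₀) / (1 + (starRingEnd ℂ) (-z₀) * z) = w := by
      rw [hw_def, hu_def, hv_def, map_neg]
      congr 1 <;> ring
    rwa [h2] at h1
  have hd2 : (1 : ℂ) + (starRingEnd ℂ) z₀ * w ≠ 0 :=
    one_add_small_ne _ (conj_small_mul z₀ w hz₀lt hwlt)
  have hφw : φ w = z := by
    rw [hφ_def]
    simp only
    rw [div_eq_iff hd2, hw_def, hv_def, hu_def]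
    have hu0' : 1 - z * (starRingEnd ℂ) z₀ ≠ 0 := by rw [mul_comm]; exact hu0
    field_simp
    ring
  have hgw := hgz w (mem_ball_zero_iff.mpr hwlt)
  rw [hg_def] at hgw
  simp only at hgw
  rw [hφw] at hgw
  have hfden : f z + (starRingEnd ℂ) a ≠ 0 := cayley_ne (f z) a (hre z hz) ha
  rw [div_eq_iff hfden, hw_def] at hgw
  have hstar : (f z - a) * u = l * v * (f z + (starRingEnd ℂ) a) := by
    have h := hgw
    field_simp [hu0] at h
    linear_combination h
  set D : ℂ := u - l * v with hD_def
  have hfD : f z * D = a * u + (starRingEnd ℂ) a * l * v := by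
    rw [hD_def]; linear_combination hstar
  have hD0 : D ≠ 0 := by
    have h1 : (1 : ℂ) - l * w ≠ 0 := by
      rw [sub_eq_add_neg]
      apply one_add_small_ne
      rw [norm_neg, norm_mul, hl1n, one_mul]; exact hwlt
    have h2 : D = u * (1 - l * w) := by
      rw [hD_def, hw_def]; field_simp
    rw [h2]
    exact mul_ne_zero hu0 h1
  set N : ℂ := a * u + (starRingEnd ℂ) a * l * v with hN_def
  -- real part identity
  have h2 : N * (starRingEnd ℂ) D + (starRingEnd ℂ) (N * (starRingEnd ℂ) D)
      = (a + (starRingEnd ℂ) a) *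
        (u * (starRingEnd ℂ) u - (l * (starRingEnd ℂ) l) * (v * (starRingEnd ℂ) v)) := by
    rw [hN_def, hD_def]
    simp only [map_mul, map_add, map_sub, map_one, Complex.conj_conj]
    ring
  rw [hl1, Complex.add_conj, Complex.mul_conj, Complex.mul_conj, Complex.add_conj] at h2
  have hkey : normSq u - normSq v = (1 - normSq z₀) * (1 - normSq z) := by
    have h := key_normSq (-z₀) z
    rw [normSq_neg] at h
    have e1 : (1 : ℂ) + (starRingEnd ℂ) (-z₀) * z = u := by
      rw [hu_def, map_neg]; ring
    have e2 : z + -z₀ = v := by rw [hv_def]; ring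
    rwa [e1, e2] at h
  have hNre : (N * (starRingEnd ℂ) D).re = a.re * ((1 - normSq z₀) * (1 - normSq z)) := by
    have h3 : (2:ℝ) * (N * (starRingEnd ℂ) D).re
        = 2 * a.re * (normSq u - 1 * normSq v) := by exact_mod_cast h2
    rw [← hkey]
    nlinarith [h3]
  have hre_eq : (f z).re * normSq D = (N * (starRingEnd ℂ) D).re := by
    have h := congrArg (fun x => x * (starRingEnd ℂ) D) hfD
    rw [mul_assoc, Complex.mul_conj] at h
    have := congrArg Complex.re h
    simpa [Complex.mul_re] using this
  have hDns : normSq D = normSq α * normSq (m - z) := by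
    have hDβ : D = β * (m - z) := by
      rw [hD_def, hu_def, hv_def, hβ_def]
      linear_combination -hβm
    rw [hDβ, Complex.normSq_mul, hnsβα]
  have hmz : m - z ≠ 0 := by
    intro h
    have : m = z := by linear_combination h
    have hm1 : ‖m‖ = 1 := by
      rw [hm_def, norm_div]
      have : ‖α‖ = ‖β‖ := by
        rw [Complex.norm_def, Complex.norm_def, hnsβα]
      rw [this, div_self (norm_ne_zero_iff.mpr hβ0)]
    rw [this] at hm1
    rw [hm1] at hzlt
    norm_num at hzlt
  have hnsz : normSq z = ‖z‖ ^ 2 := by rw [Complex.normSq_eq_norm_sq]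
  have hnsmz : normSq (m - z) = ‖m - z‖ ^ 2 := by
    rw [Complex.normSq_eq_norm_sq]
  have hDns0 : normSq D ≠ 0 := fun h => hD0 (Complex.normSq_eq_zero.mp h)
  have hfinal : (f z).re = a.re * ((1 - normSq z₀) * (1 - normSq z)) / normSq D := by
    rw [← hNre, ← hre_eq]
    field_simp
  rw [hfinal, hDns, hnsz, hnsmz]
  have hα0' : normSq α ≠ 0 := fun h => hα0 (Complex.normSq_eq_zero.mp h)
  have hmz0 : ‖m - z‖ ^ 2 ≠ 0 := by
    rw [← hnsmz]; exact fun h => hmz (Complex.normSq_eq_zero.mp h)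
  field_simp
end

section
/- Let h : ℂ × ℝ → ℝ satisfy: (i) for every t ∈ ℝ, the function z ↦ h(z,t) is harmonic on the open unit disk 𝔻 = {z ∈ ℂ : |z| < 1}, is positive there, and satisfies h(0,t) = 1; (ii) for every z ∈ 𝔻, the function t ↦ h(z,t) is Lebesgue measurable. Define Φ : 𝔻 × ℝ → 𝔻 × ℝ by Φ(z,t) = (z, φ(z,t)) with φ(z,t) := ∫₀ᵗ h(z,s) ds (signed integral). Then Φ is a well-defined bijection of 𝔻 × ℝ onto itself which is a homeomorphism, and both Φ and Φ⁻¹ are locally Lipschitz on 𝔻 × ℝ (with respect to the product of the Euclidean metrics); moreover for each fixed t, z ↦ φ(z,t) is harmonic on 𝔻. (This is the locally bi-Lipschitz fiberwise-integration map φ̃ of Section 4.1, used to put a smooth structure on the suspension bundle for which the action is bi-Lipschitz; local bi-Lipschitzness follows from Harnack's inequality.) -/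
open MeasureTheory

/-- A function `u : ℂ → ℝ` is harmonic on the open unit disk iff it is the real part of a
holomorphic function there (the disk is simply connected). -/
def IsHarmonicOnDisk (u : ℂ → ℝ) : Prop :=
  ∃ F : ℂ → ℂ, DifferentiableOn ℂ F (Metric.ball 0 1) ∧
    ∀ z ∈ Metric.ball (0 : ℂ) 1, (F z).re = u z

open Metric Set Complex

lemma monoM {a b : ℝ} (ha : 0 ≤ a) (hab : a ≤ b) (hb : b < 1) :
    (1 + a) / (1 - a) ≤ (1 + b) / (1 - b) := by
  apply div_le_div₀ (by linarith) (by linarith) (by linarith) (by linarith)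

lemma antiC {a b : ℝ} (ha : 0 ≤ a) (hab : a ≤ b) (hb : b < 1) :
    (1 - b) / (1 + b) ≤ (1 - a) / (1 + a) := by
  apply div_le_div₀ (by linarith) (by linarith) (by linarith) (by linarith)

/-- Harnack's inequality on the unit disk, via the Schwarz lemma. -/
lemma harnack {F : ℂ → ℂ} (hd : DifferentiableOn ℂ F (ball 0 1))
    (hre : ∀ z ∈ ball (0:ℂ) 1, 0 < (F z).re) (h0 : F 0 = 1) :
    ∀ z ∈ ball (0:ℂ) 1,
      ‖F z‖ ≤ (1 + ‖z‖) / (1 - ‖z‖) ∧ (1 - ‖z‖) / (1 + ‖z‖) ≤ (F z).re := by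
  set g : ℂ → ℂ := fun z => (F z - 1) / (F z + 1) with hg
  have hne : ∀ z ∈ ball (0:ℂ) 1, F z + 1 ≠ 0 := by
    intro z hz hc
    have h2 : (F z + 1).re = 0 := by rw [hc]; simp
    simp only [Complex.add_re, Complex.one_re] at h2
    have := hre z hz
    linarith
  have hgd : DifferentiableOn ℂ g (ball 0 1) :=
    DifferentiableOn.div (hd.sub (differentiableOn_const 1)) (hd.add (differentiableOn_const 1)) hne
  have habs : ∀ z ∈ ball (0:ℂ) 1, ‖F z - 1‖ < ‖F z + 1‖ := by
    intro z hz
    have h1 : Complex.normSq (F z - 1) < Complex.normSq (F z + 1) := by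
      simp only [Complex.normSq_apply, Complex.sub_re, Complex.sub_im, Complex.add_re,
        Complex.add_im, Complex.one_re, Complex.one_im]
      nlinarith [hre z hz]
    have := Real.sqrt_lt_sqrt (Complex.normSq_nonneg _) h1
    rw [Complex.norm_def, Complex.norm_def]; exact this
  have hmaps : MapsTo g (ball (0:ℂ) 1) (ball (0:ℂ) 1) := by
    intro z hz
    rw [mem_ball_zero_iff, hg]
    simp only [norm_div]
    have hpos : 0 < ‖F z + 1‖ := norm_pos_iff.2 (hne z hz)
    rw [div_lt_one hpos]
    exact habs z hz
  have hg0 : g 0 = 0 := by simp [hg, h0]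
  -- Schwarz lemma
  have schwarz : ∀ z ∈ ball (0:ℂ) 1, ‖g z‖ ≤ ‖z‖ := by
    intro z hz
    exact Complex.norm_le_norm_of_mapsTo_ball hgd (hmaps.mono_right ball_subset_closedBall) hg0 (mem_ball_zero_iff.1 hz)
  intro z hz
  have hz1 : ‖z‖ < 1 := mem_ball_zero_iff.1 hz
  have hz0 : (0:ℝ) ≤ ‖z‖ := norm_nonneg z
  have hgz : ‖g z‖ ≤ ‖z‖ := by simpa using schwarz z hz
  have hgne : (1 : ℂ) - g z ≠ 0 := by
    intro hc
    have : g z = 1 := by linear_combination -hc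
    rw [this] at hgz; simp at hgz
    linarith
  -- recover F from g
  have hFg : F z = (1 + g z) / (1 - g z) := by
    have hne' := hne z hz
    rw [hg]
    field_simp
    ring
  have hub : ‖1 + g z‖ ≤ 1 + ‖z‖ := by
    calc ‖1 + g z‖ ≤ ‖(1:ℂ)‖ + ‖g z‖ := norm_add_le _ _
    _ ≤ 1 + ‖z‖ := by simp; exact hgz
  have hlb : 1 - ‖z‖ ≤ ‖1 - g z‖ := by
    have h2 := norm_sub_norm_le (1:ℂ) (g z)
    simp only [norm_one] at h2
    linarith
  have hub2 : ‖1 - g z‖ ≤ 1 + ‖z‖ := by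
    calc ‖1 - g z‖ ≤ ‖(1:ℂ)‖ + ‖g z‖ := norm_sub_le _ _
    _ ≤ 1 + ‖z‖ := by simp; exact hgz
  constructor
  · rw [hFg, norm_div]
    exact div_le_div₀ (by linarith) hub (by linarith) hlb
  · -- re part
    rw [hFg]
    rw [Complex.div_re, ← add_div]
    have hnum : (1 + g z).re * (1 - g z).re + (1 + g z).im * (1 - g z).im
        = 1 - Complex.normSq (g z) := by
      simp only [Complex.add_re, Complex.add_im, Complex.sub_re, Complex.sub_im, Complex.one_re,
        Complex.one_im, Complex.normSq_apply]
      ring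
    rw [hnum]
    have hden : Complex.normSq (1 - g z) ≤ (1 + ‖z‖)^2 := by
      have : Complex.normSq (1 - g z) = ‖1 - g z‖^2 := (Complex.sq_norm _).symm
      rw [this]
      apply pow_le_pow_left₀ (norm_nonneg _) hub2
    have hnum2 : 1 - ‖z‖^2 ≤ 1 - Complex.normSq (g z) := by
      have : Complex.normSq (g z) = ‖g z‖^2 := (Complex.sq_norm _).symm
      rw [this]
      nlinarith [norm_nonneg (g z)]
    have hdenpos : (0:ℝ) < Complex.normSq (1 - g z) := by
      rw [Complex.normSq_pos]; exact hgne
    have hgsq : Complex.normSq (g z) ≤ ‖z‖^2 := by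
      have : Complex.normSq (g z) = ‖g z‖^2 := (Complex.sq_norm _).symm
      rw [this]
      exact pow_le_pow_left₀ (norm_nonneg _) hgz 2
    have key : (1 - ‖z‖^2) / (1 + ‖z‖)^2 ≤ (1 - Complex.normSq (g z)) / Complex.normSq (1 - g z) :=
      div_le_div₀ (by nlinarith) hnum2 hdenpos hden
    have eq1 : (1 - ‖z‖) / (1 + ‖z‖) = (1 - ‖z‖^2) / (1 + ‖z‖)^2 := by
      rw [div_eq_div_iff (by linarith) (by positivity)]; ring
    rw [eq1]; exact key

section
variable {h : ℂ × ℝ → ℝ} (harm : ∀ t : ℝ, IsHarmonicOnDisk fun z => h (z, t))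

/-- normalized holomorphic representative of `h (·, s)`. -/
noncomputable def Kf (harm : ∀ t : ℝ, IsHarmonicOnDisk fun z => h (z, t)) (s : ℝ) : ℂ → ℂ :=
  fun z => Classical.choose (harm s) z - ((Classical.choose (harm s) 0).im : ℂ) * Complex.I

lemma Kf_diff (s : ℝ) : DifferentiableOn ℂ (Kf harm s) (ball 0 1) :=
  (Classical.choose_spec (harm s)).1.sub (differentiableOn_const _)

lemma Kf_re (s : ℝ) {z : ℂ} (hz : z ∈ ball (0:ℂ) 1) : (Kf harm s z).re = h (z, s) := by
  have := (Classical.choose_spec (harm s)).2 z hz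
  simp [Kf, this]

lemma Kf_zero (hnorm : ∀ t : ℝ, h (0, t) = 1) (s : ℝ) : Kf harm s 0 = 1 := by
  have h1 := (Classical.choose_spec (harm s)).2 0 (mem_ball_self one_pos)
  simp only [] at h1
  rw [hnorm s] at h1
  apply Complex.ext
  · simp [Kf, h1]
  · simp [Kf]

end

section
variable {h : ℂ × ℝ → ℝ} (harm : ∀ t : ℝ, IsHarmonicOnDisk fun z => h (z, t))
  (pos : ∀ t : ℝ, ∀ z ∈ Metric.ball (0 : ℂ) 1, 0 < h (z, t))
  (hnorm : ∀ t : ℝ, h (0, t) = 1)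
include harm pos hnorm

lemma Kf_harnack (s : ℝ) {z : ℂ} (hz : z ∈ ball (0:ℂ) 1) :
    ‖Kf harm s z‖ ≤ (1 + ‖z‖) / (1 - ‖z‖) ∧
      (1 - ‖z‖) / (1 + ‖z‖) ≤ h (z, s) := by
  have hre : ∀ w ∈ ball (0:ℂ) 1, 0 < (Kf harm s w).re := fun w hw => by
    rw [Kf_re harm s hw]; exact pos s w hw
  have := harnack (Kf_diff harm s) hre (Kf_zero harm hnorm s) z hz
  rwa [Kf_re harm s hz] at this

/-- bounds on a sub-disk of radius `r`. -/
lemma Kf_bound {r : ℝ} (hr : r < 1) (s : ℝ) {z : ℂ} (hz : ‖z‖ ≤ r) :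
    ‖Kf harm s z‖ ≤ (1 + r) / (1 - r) ∧
      (1 - r) / (1 + r) ≤ h (z, s) ∧ h (z, s) ≤ (1 + r) / (1 - r) := by
  have hz0 : (0:ℝ) ≤ ‖z‖ := norm_nonneg z
  have hzb : z ∈ ball (0:ℂ) 1 := mem_ball_zero_iff.2 (lt_of_le_of_lt hz hr)
  obtain ⟨h1, h2⟩ := Kf_harnack harm pos hnorm s hzb
  have hM := monoM hz0 hz hr
  refine ⟨h1.trans hM, (antiC hz0 hz hr).trans h2, ?_⟩
  calc h (z, s) = (Kf harm s z).re := (Kf_re harm s hzb).symm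
  _ ≤ ‖Kf harm s z‖ := Complex.re_le_norm _
  _ ≤ (1 + r) / (1 - r) := h1.trans hM

/-- Cauchy-Schwarz derivative bound, uniform in `s`, on the disk of radius `r`. -/
lemma Kf_deriv_bound {r : ℝ} (hr0 : 0 ≤ r) (hr : r < 1) (s : ℝ) {z : ℂ} (hz : ‖z‖ ≤ r) :
    ‖deriv (Kf harm s) z‖ ≤ (2 * ((1 + (1+r)/2) / (1 - (1+r)/2)) + 1) / ((1 - r) / 2) := by
  set r' : ℝ := (1 + r) / 2 with hr'
  set δ : ℝ := (1 - r) / 2 with hδ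
  set M : ℝ := (1 + r') / (1 - r') with hM
  have hδpos : 0 < δ := by rw [hδ]; linarith
  have hr'1 : r' < 1 := by rw [hr']; linarith
  have hsub : ball z δ ⊆ ball (0:ℂ) 1 := by
    intro w hw
    rw [mem_ball_zero_iff]
    have : dist w z < δ := mem_ball.1 hw
    have : ‖w‖ ≤ ‖z‖ + ‖w - z‖ := norm_le_insert' w z
    rw [dist_eq_norm] at *
    calc ‖w‖ ≤ ‖w - z‖ + ‖z‖ := by linarith
    _ < δ + r := by linarith [mem_ball.1 hw]
    _ < 1 := by rw [hδ]; linarith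
  have hwr' : ∀ w ∈ ball z δ, ‖w‖ ≤ r' := by
    intro w hw
    have h1 : ‖w - z‖ < δ := by rw [← dist_eq_norm]; exact mem_ball.1 hw
    have : ‖w‖ ≤ ‖z‖ + ‖w - z‖ := norm_le_insert' w z
    rw [hr']; rw [hδ] at h1; linarith
  have hmaps : MapsTo (Kf harm s) (ball z δ) (ball (Kf harm s z) (2 * M + 1)) := by
    intro w hw
    rw [mem_ball, dist_eq_norm]
    have hbw := (Kf_bound harm pos hnorm hr'1 s (hwr' w hw)).1
    have hbz := (Kf_bound harm pos hnorm hr'1 s (hz.trans (by rw [hr']; linarith))).1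
    calc ‖Kf harm s w - Kf harm s z‖ ≤ ‖Kf harm s w‖ + ‖Kf harm s z‖ := norm_sub_le _ _
    _ ≤ M + M := by
        rw [hM]; exact add_le_add hbw hbz
    _ < 2 * M + 1 := by linarith
  have := Complex.norm_deriv_le_div_of_mapsTo_ball ((Kf_diff harm s).mono hsub) (hmaps.mono_right ball_subset_closedBall) hδpos
  exact this

/-- Lipschitz estimate for `h (·, s)` on the closed disk of radius `r`, uniform in `s`. -/
lemma h_lip {r : ℝ} (hr0 : 0 ≤ r) (hr : r < 1) (s : ℝ) {z z' : ℂ}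
    (hz : ‖z‖ ≤ r) (hz' : ‖z'‖ ≤ r) :
    |h (z, s) - h (z', s)| ≤
      ((2 * ((1 + (1+r)/2) / (1 - (1+r)/2)) + 1) / ((1 - r) / 2)) * ‖z - z'‖ := by
  set B : ℝ := (2 * ((1 + (1+r)/2) / (1 - (1+r)/2)) + 1) / ((1 - r) / 2) with hB
  have hsub : closedBall (0:ℂ) r ⊆ ball (0:ℂ) 1 := closedBall_subset_ball (by linarith)
  have hdiff : ∀ w ∈ closedBall (0:ℂ) r, HasFDerivWithinAt (Kf harm s)
      (ContinuousLinearMap.restrictScalars ℝ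
        ((1 : ℂ →L[ℂ] ℂ).smulRight (deriv (Kf harm s) w))) (closedBall (0:ℂ) r) w := by
    intro w hw
    have hw1 : w ∈ ball (0:ℂ) 1 := hsub hw
    have : DifferentiableAt ℂ (Kf harm s) w :=
      (Kf_diff harm s).differentiableAt (isOpen_ball.mem_nhds hw1)
    exact (this.hasDerivAt.hasFDerivAt.restrictScalars ℝ).hasFDerivWithinAt
  have hbound : ∀ w ∈ closedBall (0:ℂ) r, ‖ContinuousLinearMap.restrictScalars ℝ
      ((1 : ℂ →L[ℂ] ℂ).smulRight (deriv (Kf harm s) w))‖ ≤ B := by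
    intro w hw
    rw [ContinuousLinearMap.norm_restrictScalars, ContinuousLinearMap.norm_smulRight_apply,
      norm_one]
    simp only [one_mul]
    exact Kf_deriv_bound harm pos hnorm hr0 hr s (mem_closedBall_zero_iff.1 hw)
  have key := (convex_closedBall (0:ℂ) r).norm_image_sub_le_of_norm_hasFDerivWithin_le
    hdiff hbound (mem_closedBall_zero_iff.2 hz') (mem_closedBall_zero_iff.2 hz)
  have hre : |h (z, s) - h (z', s)| ≤ ‖Kf harm s z - Kf harm s z'‖ := by
    rw [← Kf_re harm s (hsub (mem_closedBall_zero_iff.2 hz)),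
      ← Kf_re harm s (hsub (mem_closedBall_zero_iff.2 hz'))]
    have : (Kf harm s z).re - (Kf harm s z').re = (Kf harm s z - Kf harm s z').re := by simp
    rw [this]
    exact Complex.abs_re_le_norm _
  exact hre.trans key

end

section
variable {h : ℂ × ℝ → ℝ} (harm : ∀ t : ℝ, IsHarmonicOnDisk fun z => h (z, t))
  (meas : ∀ z ∈ Metric.ball (0 : ℂ) 1, Measurable fun t => h (z, t))
include harm meas

/-- `HasDerivAt` for `Kf` at interior points. -/
lemma Kf_hasDerivAt (s : ℝ) {w : ℂ} (hw : w ∈ ball (0:ℂ) 1) :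
    HasDerivAt (Kf harm s) (deriv (Kf harm s) w) w :=
  ((Kf_diff harm s).differentiableAt (isOpen_ball.mem_nhds hw)).hasDerivAt

omit meas in
lemma Kf_deriv_continuousOn (s : ℝ) :
    ContinuousOn (deriv (Kf harm s)) (ball (0:ℂ) 1) :=
  (((Kf_diff harm s).analyticOnNhd isOpen_ball).deriv).continuousOn

/-- measurability in `s` of the complex derivative, via difference quotients of `h`. -/
lemma Kf_deriv_meas {w : ℂ} (hw : w ∈ ball (0:ℂ) 1) :
    Measurable fun s => deriv (Kf harm s) w := by
  classical
  -- real-direction difference quotients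
  set fRe : ℕ → ℝ → ℝ := fun n s =>
    if w + (((n:ℝ)+1)⁻¹ : ℝ) ∈ ball (0:ℂ) 1 then
      ((n:ℝ)+1) * (h (w + (((n:ℝ)+1)⁻¹ : ℝ), s) - h (w, s)) else 0 with hfRe
  set fIm : ℕ → ℝ → ℝ := fun n s =>
    if w + (((n:ℝ)+1)⁻¹ : ℝ) * Complex.I ∈ ball (0:ℂ) 1 then
      ((n:ℝ)+1) * (h (w + (((n:ℝ)+1)⁻¹ : ℝ) * Complex.I, s) - h (w, s)) else 0 with hfIm
  have hmeas : ∀ n, Measurable (fRe n) ∧ Measurable (fIm n) := by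
    intro n
    constructor
    · rw [hfRe]; dsimp only
      split_ifs with hc
      · exact (measurable_const.mul ((meas _ hc).sub (meas _ hw)))
      · exact measurable_const
    · rw [hfIm]; dsimp only
      split_ifs with hc
      · exact (measurable_const.mul ((meas _ hc).sub (meas _ hw)))
      · exact measurable_const
  -- the sequence of real steps tends to w within ≠ w
  have hεpos : ∀ n : ℕ, (0:ℝ) < ((n:ℝ)+1)⁻¹ := fun n => by positivity
  have hε0 : Filter.Tendsto (fun n : ℕ => (((n:ℝ)+1)⁻¹ : ℝ)) Filter.atTop (nhds 0) :=
    tendsto_one_div_add_atTop_nhds_zero_nat.congr (fun n => by rw [one_div])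
  -- limits
  have keyRe : ∀ s, Filter.Tendsto (fun n => fRe n s) Filter.atTop
      (nhds ((deriv (Kf harm s) w).re)) := by
    intro s
    have hd := (Kf_hasDerivAt harm meas s hw)
    rw [hasDerivAt_iff_tendsto_slope] at hd
    have hseq : Filter.Tendsto (fun n : ℕ => w + ((((n:ℝ)+1)⁻¹ : ℝ) : ℂ))
        Filter.atTop (nhdsWithin w {w}ᶜ) := by
      rw [tendsto_nhdsWithin_iff]
      constructor
      · have : Filter.Tendsto (fun n : ℕ => ((((n:ℝ)+1)⁻¹ : ℝ) : ℂ)) Filter.atTop (nhds 0) := by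
          rw [show (0:ℂ) = ((0:ℝ):ℂ) by simp]
          exact (Complex.continuous_ofReal.tendsto 0).comp hε0
        simpa using (tendsto_const_nhds (x := w)).add this
      · filter_upwards with n
        simp only [Set.mem_compl_iff, Set.mem_singleton_iff]
        intro hc
        have : ((((n:ℝ)+1)⁻¹ : ℝ) : ℂ) = 0 := by linear_combination hc
        rw [Complex.ofReal_eq_zero] at this
        exact (hεpos n).ne' this
    have := (hd.comp hseq)
    have hre := (Complex.continuous_re.tendsto _).comp this
    -- identify the composed sequence with fRe eventually
    apply hre.congr'
    have hball : ∀ᶠ n : ℕ in Filter.atTop, w + ((((n:ℝ)+1)⁻¹ : ℝ) : ℂ) ∈ ball (0:ℂ) 1 := by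
      have : Filter.Tendsto (fun n : ℕ => w + ((((n:ℝ)+1)⁻¹ : ℝ) : ℂ)) Filter.atTop (nhds w) := by
        have : Filter.Tendsto (fun n : ℕ => ((((n:ℝ)+1)⁻¹ : ℝ) : ℂ)) Filter.atTop (nhds 0) := by
          rw [show (0:ℂ) = ((0:ℝ):ℂ) by simp]
          exact (Complex.continuous_ofReal.tendsto 0).comp hε0
        simpa using (tendsto_const_nhds (x := w)).add this
      exact this.eventually (isOpen_ball.eventually_mem hw)
    filter_upwards [hball] with n hn
    rw [hfRe]
    simp only [Function.comp_apply, if_pos hn]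
    rw [slope_def_field]
    have harith : w + ((((n:ℝ)+1)⁻¹ : ℝ) : ℂ) - w = ((((n:ℝ)+1)⁻¹ : ℝ) : ℂ) := by ring
    rw [harith, Complex.div_ofReal_re]
    rw [Complex.sub_re, Kf_re harm s hn, Kf_re harm s hw]
    rw [div_eq_inv_mul, inv_inv]
  have keyIm : ∀ s, Filter.Tendsto (fun n => fIm n s) Filter.atTop
      (nhds ((Complex.I * deriv (Kf harm s) w).re)) := by
    intro s
    have hd := (Kf_hasDerivAt harm meas s hw)
    rw [hasDerivAt_iff_tendsto_slope] at hd
    have htend0 : Filter.Tendsto (fun n : ℕ => ((((n:ℝ)+1)⁻¹ : ℝ) : ℂ) * Complex.I)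
        Filter.atTop (nhds 0) := by
      have h1 : Filter.Tendsto (fun n : ℕ => ((((n:ℝ)+1)⁻¹ : ℝ) : ℂ)) Filter.atTop (nhds 0) := by
        rw [show (0:ℂ) = ((0:ℝ):ℂ) by simp]
        exact (Complex.continuous_ofReal.tendsto 0).comp hε0
      simpa using h1.mul_const Complex.I
    have htendw : Filter.Tendsto (fun n : ℕ => w + ((((n:ℝ)+1)⁻¹ : ℝ) : ℂ) * Complex.I)
        Filter.atTop (nhds w) := by
      simpa using (tendsto_const_nhds (x := w)).add htend0
    have hseq : Filter.Tendsto (fun n : ℕ => w + ((((n:ℝ)+1)⁻¹ : ℝ) : ℂ) * Complex.I)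
        Filter.atTop (nhdsWithin w {w}ᶜ) := by
      rw [tendsto_nhdsWithin_iff]
      refine ⟨htendw, ?_⟩
      filter_upwards with n
      simp only [Set.mem_compl_iff, Set.mem_singleton_iff]
      intro hc
      have h2 : ((((n:ℝ)+1)⁻¹ : ℝ) : ℂ) * Complex.I = 0 := by linear_combination hc
      rcases mul_eq_zero.1 h2 with h3 | h3
      · rw [Complex.ofReal_eq_zero] at h3; exact (hεpos n).ne' h3
      · exact Complex.I_ne_zero h3
    have hslope := hd.comp hseq
    have hmul := hslope.const_mul (Complex.I)
    have hre := (Complex.continuous_re.tendsto _).comp hmul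
    apply hre.congr'
    have hball : ∀ᶠ n : ℕ in Filter.atTop,
        w + ((((n:ℝ)+1)⁻¹ : ℝ) : ℂ) * Complex.I ∈ ball (0:ℂ) 1 :=
      htendw.eventually (isOpen_ball.eventually_mem hw)
    filter_upwards [hball] with n hn
    rw [hfIm]
    simp only [Function.comp_apply, if_pos hn]
    rw [slope_def_field]
    have harith : w + ((((n:ℝ)+1)⁻¹ : ℝ) : ℂ) * Complex.I - w
        = ((((n:ℝ)+1)⁻¹ : ℝ) : ℂ) * Complex.I := by ring
    rw [harith]
    have harith2 : Complex.I * ((Kf harm s (w + ((((n:ℝ)+1)⁻¹ : ℝ) : ℂ) * Complex.I) - Kf harm s w)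
        / (((((n:ℝ)+1)⁻¹ : ℝ) : ℂ) * Complex.I))
        = (Kf harm s (w + ((((n:ℝ)+1)⁻¹ : ℝ) : ℂ) * Complex.I) - Kf harm s w)
          / (((((n:ℝ)+1)⁻¹ : ℝ) : ℂ)) := by
      rw [div_mul_eq_div_div, mul_comm, div_mul_cancel₀ _ Complex.I_ne_zero]
    rw [harith2, Complex.div_ofReal_re]
    rw [Complex.sub_re, Kf_re harm s hn, Kf_re harm s hw]
    rw [div_eq_inv_mul, inv_inv]
  have mg1 : Measurable fun s => (deriv (Kf harm s) w).re :=
    measurable_of_tendsto_metrizable (fun n => (hmeas n).1)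
      (tendsto_pi_nhds.2 keyRe)
  have mg2 : Measurable fun s => (Complex.I * deriv (Kf harm s) w).re :=
    measurable_of_tendsto_metrizable (fun n => (hmeas n).2)
      (tendsto_pi_nhds.2 keyIm)
  have : (fun s => deriv (Kf harm s) w)
      = fun s => (((deriv (Kf harm s) w).re : ℝ) : ℂ)
          - (((Complex.I * deriv (Kf harm s) w).re : ℝ) : ℂ) * Complex.I := by
    funext s
    apply Complex.ext <;> simp
  rw [this]
  exact (Complex.measurable_ofReal.comp mg1).sub
    ((Complex.measurable_ofReal.comp mg2).mul_const Complex.I)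

end

section
variable {h : ℂ × ℝ → ℝ} (harm : ∀ t : ℝ, IsHarmonicOnDisk fun z => h (z, t))
  (meas : ∀ z ∈ Metric.ball (0 : ℂ) 1, Measurable fun t => h (z, t))
include harm meas

lemma Kf_meas (hnorm : ∀ t : ℝ, h (0, t) = 1) {z : ℂ} (hz : z ∈ ball (0:ℂ) 1) :
    Measurable fun s => Kf harm s z := by
  have hz1 : ‖z‖ < 1 := mem_ball_zero_iff.1 hz
  set clamp : ℝ → ℝ := fun τ => min 1 (max 0 τ) with hclamp
  have hclamp_mem : ∀ τ : ℝ, ((clamp τ : ℝ) : ℂ) * z ∈ ball (0:ℂ) 1 := by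
    intro τ
    rw [mem_ball_zero_iff, norm_mul, Complex.norm_real]
    have h1 : |clamp τ| ≤ 1 := by
      rw [abs_le]
      constructor
      · have : (0:ℝ) ≤ max 0 τ := le_max_left _ _
        simp only [hclamp]; rw [le_min_iff]; constructor <;> linarith
      · simp only [hclamp]; exact min_le_left _ _
    have := norm_nonneg z
    calc |clamp τ| * ‖z‖ ≤ 1 * ‖z‖ := by
          exact mul_le_mul_of_nonneg_right h1 (norm_nonneg z)
    _ < 1 := by rwa [one_mul]
  have hclamp_cont : Continuous clamp := continuous_const.min (continuous_const.max continuous_id)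
  set u : ℝ → ℝ → ℂ := fun τ s => z * deriv (Kf harm s) (((clamp τ : ℝ) : ℂ) * z) with hu
  -- joint measurability
  have hu_cont : ∀ s, Continuous fun τ => u τ s := by
    intro s
    apply Continuous.mul continuous_const
    refine (Kf_deriv_continuousOn harm s).comp_continuous ?_ hclamp_mem
    exact (Complex.continuous_ofReal.comp hclamp_cont).mul continuous_const
  have hu_meas : ∀ τ, Measurable fun s => u τ s := fun τ =>
    measurable_const.mul (Kf_deriv_meas harm meas (hclamp_mem τ))
  have hjoint : Measurable (Function.uncurry u) :=
    measurable_uncurry_of_continuous_of_measurable hu_cont hu_meas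
  have hjoint' : StronglyMeasurable (Function.uncurry fun s τ => u τ s) :=
    ((hjoint.comp measurable_swap).stronglyMeasurable)
  have hint_meas : Measurable fun s => ∫ τ, u τ s ∂(volume.restrict (Ioc (0:ℝ) 1)) := by
    have := hjoint'.integral_prod_right' (ν := volume.restrict (Ioc (0:ℝ) 1))
    exact this.measurable
  -- FTC identification
  have hFTC : ∀ s : ℝ, ∫ τ, u τ s ∂(volume.restrict (Ioc (0:ℝ) 1)) = Kf harm s z - 1 := by
    intro s
    have hderiv : ∀ τ ∈ uIcc (0:ℝ) 1,
        HasDerivAt (fun τ : ℝ => Kf harm s (((τ:ℝ):ℂ) * z))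
          (z * deriv (Kf harm s) (((τ:ℝ):ℂ) * z)) τ := by
      intro τ hτ
      rw [uIcc_of_le zero_le_one] at hτ
      have hmem : ((τ:ℝ):ℂ) * z ∈ ball (0:ℂ) 1 := by
        rw [mem_ball_zero_iff, norm_mul, Complex.norm_real]
        calc |τ| * ‖z‖ ≤ 1 * ‖z‖ := by
              apply mul_le_mul_of_nonneg_right _ (norm_nonneg z)
              rw [abs_le]; exact ⟨by linarith [hτ.1], hτ.2⟩
        _ < 1 := by rwa [one_mul]
      have hK := Kf_hasDerivAt harm meas s hmem
      have hc : HasDerivAt (fun τ : ℝ => ((τ:ℝ):ℂ) * z) z τ := by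
        simpa using ((hasDerivAt_id τ).ofReal_comp).mul_const z
      have := (hK.hasFDerivAt.restrictScalars ℝ).comp_hasDerivAt τ hc
      simpa [mul_comm, Function.comp_def] using this
    have hcont : ContinuousOn (fun τ : ℝ => z * deriv (Kf harm s) (((τ:ℝ):ℂ) * z))
        (uIcc (0:ℝ) 1) := by
      apply ContinuousOn.mul continuousOn_const
      apply (Kf_deriv_continuousOn harm s).comp
      · exact ((Complex.continuous_ofReal.comp continuous_id).mul continuous_const).continuousOn
      · intro τ hτ
        rw [uIcc_of_le zero_le_one] at hτ
        rw [mem_ball_zero_iff, norm_mul, Complex.norm_real]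
        calc |τ| * ‖z‖ ≤ 1 * ‖z‖ := by
              apply mul_le_mul_of_nonneg_right _ (norm_nonneg z)
              rw [abs_le]; exact ⟨by linarith [hτ.1], hτ.2⟩
        _ < 1 := by rwa [one_mul]
    have hFTC1 := intervalIntegral.integral_eq_sub_of_hasDerivAt hderiv
      (hcont.intervalIntegrable)
    have heq : ∀ τ ∈ uIcc (0:ℝ) 1, u τ s = z * deriv (Kf harm s) (((τ:ℝ):ℂ) * z) := by
      intro τ hτ
      rw [uIcc_of_le zero_le_one] at hτ
      rw [hu]
      have hcl : clamp τ = τ := by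
        simp only [hclamp]
        rw [max_eq_right hτ.1, min_eq_right hτ.2]
      simp only [hcl]
    have : (∫ τ in (0:ℝ)..1, u τ s) = ∫ τ in (0:ℝ)..1, z * deriv (Kf harm s) (((τ:ℝ):ℂ) * z) :=
      intervalIntegral.integral_congr heq
    rw [← intervalIntegral.integral_of_le zero_le_one, this, hFTC1]
    simp [Kf_zero harm hnorm s]
  have : (fun s => Kf harm s z) = fun s => (∫ τ, u τ s ∂(volume.restrict (Ioc (0:ℝ) 1))) + 1 := by
    funext s; rw [hFTC s]; ring
  rw [this]
  exact hint_meas.add_const 1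

end

section
variable {h : ℂ × ℝ → ℝ} (harm : ∀ t : ℝ, IsHarmonicOnDisk fun z => h (z, t))
  (pos : ∀ t : ℝ, ∀ z ∈ Metric.ball (0 : ℂ) 1, 0 < h (z, t))
  (hnorm : ∀ t : ℝ, h (0, t) = 1)
  (meas : ∀ z ∈ Metric.ball (0 : ℂ) 1, Measurable fun t => h (z, t))
include harm pos hnorm meas

lemma h_intInt {z : ℂ} (hz : z ∈ ball (0:ℂ) 1) (a b : ℝ) :
    IntervalIntegrable (fun s => h (z, s)) volume a b := by
  have hz1 : ‖z‖ < 1 := mem_ball_zero_iff.1 hz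
  apply IntervalIntegrable.mono_fun' (g := fun _ : ℝ => (1 + ‖z‖) / (1 - ‖z‖))
    intervalIntegrable_const (meas z hz).aestronglyMeasurable
  filter_upwards with s
  have hb := Kf_bound harm pos hnorm hz1 s (le_refl ‖z‖)
  rw [Real.norm_eq_abs, abs_le]
  constructor
  · have c1 : (0:ℝ) ≤ (1 - ‖z‖) / (1 + ‖z‖) :=
      le_of_lt (div_pos (by linarith) (by linarith [norm_nonneg z]))
    nlinarith [hb.2.1, hb.2.2]
  · exact hb.2.2

lemma phi_bounds {r : ℝ} (hr : r < 1) {z : ℂ} (hz : ‖z‖ ≤ r) {a b : ℝ} (hab : a ≤ b) :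
    (1 - r) / (1 + r) * (b - a) ≤ (∫ s in a..b, h (z, s)) ∧
      (∫ s in a..b, h (z, s)) ≤ (1 + r) / (1 - r) * (b - a) := by
  have hr0 : (0:ℝ) ≤ r := le_trans (norm_nonneg z) hz
  have hz1 : z ∈ ball (0:ℂ) 1 := mem_ball_zero_iff.2 (lt_of_le_of_lt hz hr)
  have hint := h_intInt harm pos hnorm meas hz1 a b
  constructor
  · have key := intervalIntegral.integral_mono_on hab intervalIntegrable_const hint
      (fun s _ => (Kf_bound harm pos hnorm hr s hz).2.1)
    rw [intervalIntegral.integral_const, smul_eq_mul] at key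
    rw [show (1 - r) / (1 + r) * (b - a) = (b - a) * ((1 - r) / (1 + r)) from mul_comm _ _]
    exact key
  · have key := intervalIntegral.integral_mono_on hab hint intervalIntegrable_const
      (fun s _ => (Kf_bound harm pos hnorm hr s hz).2.2)
    rw [intervalIntegral.integral_const, smul_eq_mul] at key
    rw [show (1 + r) / (1 - r) * (b - a) = (b - a) * ((1 + r) / (1 - r)) from mul_comm _ _]
    exact key

lemma phi_strictMono {z : ℂ} (hz : z ∈ ball (0:ℂ) 1) :
    StrictMono (fun t => ∫ s in (0:ℝ)..t, h (z, s)) := by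
  have hz1 : ‖z‖ < 1 := mem_ball_zero_iff.1 hz
  intro t t' htt
  have hsub : (∫ s in (0:ℝ)..t', h (z, s)) - (∫ s in (0:ℝ)..t, h (z, s))
      = ∫ s in t..t', h (z, s) :=
    intervalIntegral.integral_interval_sub_left (h_intInt harm pos hnorm meas hz 0 t')
      (h_intInt harm pos hnorm meas hz 0 t)
  have hlb := (phi_bounds harm pos hnorm meas hz1 (le_refl ‖z‖) htt.le).1
  have hcpos : 0 < (1 - ‖z‖) / (1 + ‖z‖) :=
    div_pos (by linarith) (by linarith [norm_nonneg z])
  have : 0 < (∫ s in t..t', h (z, s)) := lt_of_lt_of_le (by nlinarith) hlb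
  dsimp only
  linarith [hsub, this]

lemma phi_cont {z : ℂ} (hz : z ∈ ball (0:ℂ) 1) :
    Continuous (fun t => ∫ s in (0:ℝ)..t, h (z, s)) :=
  intervalIntegral.continuous_primitive (fun a b => h_intInt harm pos hnorm meas hz a b) 0

lemma phi_surj {z : ℂ} (hz : z ∈ ball (0:ℂ) 1) :
    Function.Surjective (fun t => ∫ s in (0:ℝ)..t, h (z, s)) := by
  have hz1 : ‖z‖ < 1 := mem_ball_zero_iff.1 hz
  set c : ℝ := (1 - ‖z‖) / (1 + ‖z‖) with hc
  have hcpos : 0 < c := by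
    rw [hc]; exact div_pos (by linarith) (by linarith [norm_nonneg z])
  intro u
  set b : ℝ := (|u| + 1) / c with hb
  have hbpos : 0 < b := by rw [hb]; positivity
  have hub : u ≤ ∫ s in (0:ℝ)..b, h (z, s) := by
    have := (phi_bounds harm pos hnorm meas hz1 (le_refl ‖z‖) hbpos.le).1
    have hcb : c * (b - 0) = |u| + 1 := by
      rw [hb]; field_simp; ring
    rw [hcb] at this
    calc u ≤ |u| := le_abs_self u
    _ ≤ |u| + 1 := by linarith
    _ ≤ _ := this
  have hlb : (∫ s in (0:ℝ)..(-b), h (z, s)) ≤ u := by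
    have h2 := (phi_bounds harm pos hnorm meas hz1 (le_refl ‖z‖) (by linarith : -b ≤ 0)).1
    have h3 : (∫ s in (-b:ℝ)..0, h (z, s)) = - ∫ s in (0:ℝ)..(-b), h (z, s) :=
      (intervalIntegral.integral_symm _ _)
    rw [h3] at h2
    have hcb : c * (0 - (-b)) = |u| + 1 := by rw [hb]; field_simp; ring
    rw [hcb] at h2
    have : (∫ s in (0:ℝ)..(-b), h (z, s)) ≤ -(|u| + 1) := by linarith
    calc (∫ s in (0:ℝ)..(-b), h (z, s)) ≤ -(|u| + 1) := this
    _ ≤ u := by linarith [neg_abs_le u]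
  have hcont : ContinuousOn (fun t => ∫ s in (0:ℝ)..t, h (z, s)) (Icc (-b) b) :=
    (phi_cont harm pos hnorm meas hz).continuousOn
  have := intermediate_value_Icc (by linarith : (-b:ℝ) ≤ b) hcont
  have hmem : u ∈ Icc ((∫ s in (0:ℝ)..(-b), h (z, s))) (∫ s in (0:ℝ)..b, h (z, s)) :=
    ⟨hlb, hub⟩
  obtain ⟨t, _, ht⟩ := this hmem
  exact ⟨t, ht⟩

end

noncomputable def Bc (r : ℝ) : ℝ := (2 * ((1 + (1+r)/2) / (1 - (1+r)/2)) + 1) / ((1 - r) / 2)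

lemma Bc_nonneg {r : ℝ} (hr0 : 0 ≤ r) (hr : r < 1) : 0 ≤ Bc r := by
  unfold Bc
  have h1 : (0:ℝ) < 1 - (1+r)/2 := by linarith
  have h2 : (0:ℝ) ≤ (1 + (1+r)/2) / (1 - (1+r)/2) := by positivity
  apply div_nonneg (by linarith) (by linarith)

section
variable {h : ℂ × ℝ → ℝ} (harm : ∀ t : ℝ, IsHarmonicOnDisk fun z => h (z, t))
  (pos : ∀ t : ℝ, ∀ z ∈ Metric.ball (0 : ℂ) 1, 0 < h (z, t))
  (hnorm : ∀ t : ℝ, h (0, t) = 1)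
  (meas : ∀ z ∈ Metric.ball (0 : ℂ) 1, Measurable fun t => h (z, t))
include harm pos hnorm meas

/-- Lipschitz-in-`z` estimate for the fiber integral. -/
lemma est_z {r : ℝ} (hr0 : 0 ≤ r) (hr : r < 1) {z z' : ℂ} (hz : ‖z‖ ≤ r) (hz' : ‖z'‖ ≤ r)
    (t : ℝ) :
    |(∫ s in (0:ℝ)..t, h (z, s)) - ∫ s in (0:ℝ)..t, h (z', s)| ≤ Bc r * ‖z - z'‖ * |t| := by
  have hzb : z ∈ ball (0:ℂ) 1 := mem_ball_zero_iff.2 (lt_of_le_of_lt hz hr)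
  have hzb' : z' ∈ ball (0:ℂ) 1 := mem_ball_zero_iff.2 (lt_of_le_of_lt hz' hr)
  have hsub : (∫ s in (0:ℝ)..t, h (z, s)) - (∫ s in (0:ℝ)..t, h (z', s))
      = ∫ s in (0:ℝ)..t, (h (z, s) - h (z', s)) :=
    (intervalIntegral.integral_sub (h_intInt harm pos hnorm meas hzb 0 t)
      (h_intInt harm pos hnorm meas hzb' 0 t)).symm
  rw [hsub]
  have := intervalIntegral.norm_integral_le_of_norm_le_const
    (C := Bc r * ‖z - z'‖) (f := fun s => h (z, s) - h (z', s)) (a := 0) (b := t) ?_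
  · rw [Real.norm_eq_abs] at this
    calc |∫ s in (0:ℝ)..t, (h (z, s) - h (z', s))| ≤ Bc r * ‖z - z'‖ * |t - 0| := this
    _ = Bc r * ‖z - z'‖ * |t| := by rw [sub_zero]
  · intro s _
    rw [Real.norm_eq_abs]
    exact h_lip harm pos hnorm hr0 hr s hz hz'

/-- Lipschitz-in-`t` estimate for the fiber integral. -/
lemma est_t {r : ℝ} (hr : r < 1) {z : ℂ} (hz : ‖z‖ ≤ r) (t t' : ℝ) :
    |(∫ s in (0:ℝ)..t, h (z, s)) - ∫ s in (0:ℝ)..t', h (z, s)| ≤ (1+r)/(1-r) * |t - t'| := by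
  have hzb : z ∈ ball (0:ℂ) 1 := mem_ball_zero_iff.2 (lt_of_le_of_lt hz hr)
  have hr0 : (0:ℝ) ≤ r := le_trans (norm_nonneg z) hz
  have hsub : (∫ s in (0:ℝ)..t, h (z, s)) - (∫ s in (0:ℝ)..t', h (z, s))
      = ∫ s in t'..t, h (z, s) :=
    intervalIntegral.integral_interval_sub_left (h_intInt harm pos hnorm meas hzb 0 t)
      (h_intInt harm pos hnorm meas hzb 0 t')
  rw [hsub]
  have := intervalIntegral.norm_integral_le_of_norm_le_const
    (C := (1+r)/(1-r)) (f := fun s => h (z, s)) (a := t') (b := t) ?_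
  · rw [Real.norm_eq_abs] at this
    exact this
  · intro s _
    have hb := Kf_bound harm pos hnorm hr s hz
    rw [Real.norm_eq_abs, abs_le]
    have c1 : (0:ℝ) ≤ (1 - r) / (1 + r) := div_nonneg (by linarith) (by linarith)
    exact ⟨by nlinarith [hb.2.1, hb.2.2], hb.2.2⟩

/-- two-sided bound: `|t| ≤ |φ z t| / c`. -/
lemma est_inv {r : ℝ} (hr : r < 1) {z : ℂ} (hz : ‖z‖ ≤ r) (t : ℝ) :
    (1-r)/(1+r) * |t| ≤ |∫ s in (0:ℝ)..t, h (z, s)| := by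
  have hr0 : (0:ℝ) ≤ r := le_trans (norm_nonneg z) hz
  have hcpos : (0:ℝ) < (1-r)/(1+r) := div_pos (by linarith) (by linarith)
  rcases le_or_gt 0 t with ht | ht
  · have h1 := (phi_bounds harm pos hnorm meas hr hz ht).1
    rw [sub_zero] at h1
    rw [_root_.abs_of_nonneg ht, _root_.abs_of_nonneg
      (le_trans (mul_nonneg hcpos.le ht) h1)]
    exact h1
  · have h2 := (phi_bounds harm pos hnorm meas hr hz ht.le).1
    have h3 : (∫ s in (t:ℝ)..0, h (z, s)) = - ∫ s in (0:ℝ)..t, h (z, s) :=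
      intervalIntegral.integral_symm _ _
    rw [h3, zero_sub] at h2
    have hneg : (∫ s in (0:ℝ)..t, h (z, s)) < 0 := by nlinarith [mul_pos hcpos (neg_pos.2 ht)]
    rw [_root_.abs_of_neg ht, _root_.abs_of_neg hneg]
    nlinarith

/-- lower Lipschitz bound in `t`. -/
lemma est_lower {r : ℝ} (hr : r < 1) {z : ℂ} (hz : ‖z‖ ≤ r) (t t' : ℝ) :
    (1-r)/(1+r) * |t - t'| ≤ |(∫ s in (0:ℝ)..t, h (z, s)) - ∫ s in (0:ℝ)..t', h (z, s)| := by
  have hr0 : (0:ℝ) ≤ r := le_trans (norm_nonneg z) hz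
  have hzb : z ∈ ball (0:ℂ) 1 := mem_ball_zero_iff.2 (lt_of_le_of_lt hz hr)
  have hsub : (∫ s in (0:ℝ)..t, h (z, s)) - (∫ s in (0:ℝ)..t', h (z, s))
      = ∫ s in t'..t, h (z, s) :=
    intervalIntegral.integral_interval_sub_left (h_intInt harm pos hnorm meas hzb 0 t)
      (h_intInt harm pos hnorm meas hzb 0 t')
  rw [hsub]
  rcases le_or_gt t' t with htt | htt
  · have := (phi_bounds harm pos hnorm meas hr hz htt).1
    rw [_root_.abs_of_nonneg (by linarith : (0:ℝ) ≤ t - t'),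
      _root_.abs_of_nonneg (le_trans (mul_nonneg (div_nonneg (by linarith) (by linarith))
        (by linarith)) this)]
    exact this
  · have h2 := (phi_bounds harm pos hnorm meas hr hz htt.le).1
    have h3 : (∫ s in (t:ℝ)..t', h (z, s)) = - ∫ s in t'..t, h (z, s) :=
      intervalIntegral.integral_symm _ _
    rw [h3] at h2
    have hneg : (∫ s in t'..t, h (z, s)) < 0 := by
      have hc : (0:ℝ) < (1-r)/(1+r) * (t' - t) := by
        apply mul_pos (div_pos (by linarith) (by linarith)) (by linarith)
      linarith
    rw [_root_.abs_of_neg (by linarith : t - t' < 0), _root_.abs_of_neg hneg]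
    linarith

end

section
variable {h : ℂ × ℝ → ℝ} (harm : ∀ t : ℝ, IsHarmonicOnDisk fun z => h (z, t))
  (pos : ∀ t : ℝ, ∀ z ∈ Metric.ball (0 : ℂ) 1, 0 < h (z, t))
  (hnorm : ∀ t : ℝ, h (0, t) = 1)
  (meas : ∀ z ∈ Metric.ball (0 : ℂ) 1, Measurable fun t => h (z, t))
include harm pos hnorm meas

lemma Kf_intInt {z : ℂ} (hz : z ∈ ball (0:ℂ) 1) (a b : ℝ) :
    IntervalIntegrable (fun s => Kf harm s z) volume a b := by
  have hz1 : ‖z‖ < 1 := mem_ball_zero_iff.1 hz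
  have hM : (0:ℝ) ≤ (1 + ‖z‖) / (1 - ‖z‖) := div_nonneg (by linarith [norm_nonneg z]) (by linarith)
  apply IntervalIntegrable.mono_fun (f := fun _ : ℝ => ((1 + ‖z‖) / (1 - ‖z‖) : ℝ))
    intervalIntegrable_const (Kf_meas harm meas hnorm hz).aestronglyMeasurable
  filter_upwards with s
  rw [Real.norm_eq_abs, _root_.abs_of_nonneg hM]
  exact (Kf_bound harm pos hnorm hz1 s (le_refl ‖z‖)).1

lemma integral_harmonic (t : ℝ) :
    IsHarmonicOnDisk fun z => ∫ s in (0:ℝ)..t, h (z, s) := by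
  refine ⟨fun z => ∫ s in (0:ℝ)..t, Kf harm s z, ?_, ?_⟩
  · intro z₀ hz₀
    have hz₀1 : ‖z₀‖ < 1 := mem_ball_zero_iff.1 hz₀
    set ε : ℝ := (1 - ‖z₀‖) / 2 with hε
    set r : ℝ := (1 + ‖z₀‖) / 2 with hr
    have hεpos : 0 < ε := by rw [hε]; linarith
    have hr1 : r < 1 := by rw [hr]; linarith
    have hr0 : (0:ℝ) ≤ r := by rw [hr]; linarith [norm_nonneg z₀]
    have hball : ∀ x ∈ ball z₀ ε, ‖x‖ ≤ r := by
      intro x hx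
      have h1 : ‖x - z₀‖ < ε := by rw [← dist_eq_norm]; exact mem_ball.1 hx
      have h2 : ‖x‖ ≤ ‖z₀‖ + ‖x - z₀‖ := norm_le_insert' x z₀
      rw [hr]; rw [hε] at h1; linarith
    have hball1 : ∀ x ∈ ball z₀ ε, x ∈ ball (0:ℂ) 1 := fun x hx =>
      mem_ball_zero_iff.2 (lt_of_le_of_lt (hball x hx) hr1)
    have key := intervalIntegral.hasDerivAt_integral_of_dominated_loc_of_deriv_le
      (F := fun x s => Kf harm s x) (F' := fun x s => deriv (Kf harm s) x)
      (x₀ := z₀) (a := 0) (b := t) (μ := volume)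
      (bound := fun _ : ℝ => (2 * ((1 + (1+r)/2) / (1 - (1+r)/2)) + 1) / ((1 - r) / 2))
      (ball_mem_nhds z₀ hεpos) ?_ ?_ ?_ ?_ ?_ ?_
    · exact (key.2.differentiableAt.differentiableWithinAt)
    · filter_upwards [isOpen_ball.eventually_mem hz₀] with x hx
      exact (Kf_meas harm meas hnorm hx).aestronglyMeasurable
    · exact Kf_intInt harm pos hnorm meas hz₀ 0 t
    · exact (Kf_deriv_meas harm meas hz₀).aestronglyMeasurable
    · filter_upwards with s
      intro _ x hx
      exact Kf_deriv_bound harm pos hnorm hr0 hr1 s (hball x hx)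
    · exact intervalIntegrable_const
    · filter_upwards with s
      intro _ x hx
      exact Kf_hasDerivAt harm meas s (hball1 x hx)
  · intro z hz
    have hre := Complex.reCLM.intervalIntegral_comp_comm
      (Kf_intInt harm pos hnorm meas hz 0 t)
    have heq : (∫ s in (0:ℝ)..t, Kf harm s z).re = ∫ s in (0:ℝ)..t, (Kf harm s z).re :=
      hre.symm
    rw [heq]
    exact intervalIntegral.integral_congr (fun s _ => Kf_re harm s hz)

end

section
variable {h : ℂ × ℝ → ℝ} (harm : ∀ t : ℝ, IsHarmonicOnDisk fun z => h (z, t))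
  (pos : ∀ t : ℝ, ∀ z ∈ Metric.ball (0 : ℂ) 1, 0 < h (z, t))
  (hnorm : ∀ t : ℝ, h (0, t) = 1)
  (meas : ∀ z ∈ Metric.ball (0 : ℂ) 1, Measurable fun t => h (z, t))
include harm pos hnorm meas

lemma ball_norm_le {p q : ℂ × ℝ} {ε : ℝ} (hq : q ∈ ball p ε) :
    ‖q.1‖ ≤ ‖p.1‖ + ε ∧ |q.2| ≤ |p.2| + ε := by
  have h1 : dist q p < ε := mem_ball.1 hq
  rw [Prod.dist_eq] at h1
  have h2 : dist q.1 p.1 < ε := lt_of_le_of_lt (le_max_left _ _) h1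
  have h3 : dist q.2 p.2 < ε := lt_of_le_of_lt (le_max_right _ _) h1
  rw [dist_eq_norm] at h2
  rw [Real.dist_eq] at h3
  constructor
  · have := norm_le_insert' q.1 p.1
    linarith
  · have := abs_sub_abs_le_abs_sub q.2 p.2
    linarith

omit harm pos hnorm meas in
lemma dist_comp {q q' : ℂ × ℝ} : dist q.1 q'.1 ≤ dist q q' ∧ dist q.2 q'.2 ≤ dist q q' := by
  rw [Prod.dist_eq]
  exact ⟨le_max_left _ _, le_max_right _ _⟩

lemma Phi_lip (p : ℂ × ℝ) (hp : p.1 ∈ ball (0:ℂ) 1) :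
    ∃ ε > (0:ℝ), ∃ K : NNReal,
      LipschitzOnWith K (fun q : ℂ × ℝ => (q.1, ∫ s in (0:ℝ)..q.2, h (q.1, s)))
        (ball p ε ∩ (ball (0:ℂ) 1 ×ˢ (univ : Set ℝ))) := by
  have hz₀ : ‖p.1‖ < 1 := mem_ball_zero_iff.1 hp
  set r : ℝ := (1 + ‖p.1‖) / 2 with hrdef
  set ε : ℝ := (1 - ‖p.1‖) / 2 with hεdef
  have hεpos : 0 < ε := by rw [hεdef]; linarith
  have hr1 : r < 1 := by rw [hrdef]; linarith
  have hr0 : (0:ℝ) ≤ r := by rw [hrdef]; linarith [norm_nonneg p.1]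
  set T : ℝ := |p.2| + ε with hTdef
  have hT0 : 0 ≤ T := by rw [hTdef]; positivity
  set B : ℝ := Bc r with hBdef
  have hB0 : 0 ≤ B := Bc_nonneg hr0 hr1
  set M : ℝ := (1 + r) / (1 - r) with hMdef
  have hM0 : 0 ≤ M := by rw [hMdef]; apply div_nonneg <;> linarith
  set C : ℝ := B * T + M with hCdef
  have hC0 : 0 ≤ C := by rw [hCdef]; positivity
  refine ⟨ε, hεpos, Real.toNNReal (max 1 C), ?_⟩
  rw [lipschitzOnWith_iff_dist_le_mul]
  intro q hq q' hq'
  have hKcoe : ((Real.toNNReal (max 1 C) : NNReal) : ℝ) = max 1 C :=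
    Real.coe_toNNReal _ (le_trans zero_le_one (le_max_left _ _))
  rw [hKcoe]
  have hq1 : ‖q.1‖ ≤ r := by
    have := (ball_norm_le harm pos hnorm meas hq.1).1
    rw [hrdef]; rw [hεdef] at this; linarith
  have hq'1 : ‖q'.1‖ ≤ r := by
    have := (ball_norm_le harm pos hnorm meas hq'.1).1
    rw [hrdef]; rw [hεdef] at this; linarith
  have hq2 : |q.2| ≤ T := by
    have := (ball_norm_le harm pos hnorm meas hq.1).2
    rw [hTdef]; linarith
  have hdistnn : (0:ℝ) ≤ dist q q' := dist_nonneg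
  have hdeq : dist ((q.1, ∫ s in (0:ℝ)..q.2, h (q.1, s)) : ℂ × ℝ)
      ((q'.1, ∫ s in (0:ℝ)..q'.2, h (q'.1, s)) : ℂ × ℝ)
      = max (dist q.1 q'.1) (dist (∫ s in (0:ℝ)..q.2, h (q.1, s))
        (∫ s in (0:ℝ)..q'.2, h (q'.1, s))) := Prod.dist_eq
  rw [hdeq]
  apply max_le
  · calc dist q.1 q'.1 ≤ dist q q' := dist_comp.1
    _ = 1 * dist q q' := (one_mul _).symm
    _ ≤ max 1 C * dist q q' := by
        apply mul_le_mul_of_nonneg_right (le_max_left _ _) hdistnn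
  · rw [Real.dist_eq]
    have tri : |(∫ s in (0:ℝ)..q.2, h (q.1, s)) - ∫ s in (0:ℝ)..q'.2, h (q'.1, s)|
        ≤ |(∫ s in (0:ℝ)..q.2, h (q.1, s)) - ∫ s in (0:ℝ)..q.2, h (q'.1, s)|
          + |(∫ s in (0:ℝ)..q.2, h (q'.1, s)) - ∫ s in (0:ℝ)..q'.2, h (q'.1, s)| := by
      have := abs_sub_le (∫ s in (0:ℝ)..q.2, h (q.1, s)) (∫ s in (0:ℝ)..q.2, h (q'.1, s))
        (∫ s in (0:ℝ)..q'.2, h (q'.1, s))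
      linarith
    have e1 := est_z harm pos hnorm meas hr0 hr1 hq1 hq'1 q.2
    have e2 := est_t harm pos hnorm meas hr1 hq'1 q.2 q'.2
    have hzz : ‖q.1 - q'.1‖ ≤ dist q q' := by
      rw [← dist_eq_norm]; exact dist_comp.1
    have htt : |q.2 - q'.2| ≤ dist q q' := by
      rw [← Real.dist_eq]; exact dist_comp.2
    calc |(∫ s in (0:ℝ)..q.2, h (q.1, s)) - ∫ s in (0:ℝ)..q'.2, h (q'.1, s)|
        ≤ B * ‖q.1 - q'.1‖ * |q.2| + M * |q.2 - q'.2| := by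
          rw [hBdef, hMdef]; exact tri.trans (add_le_add e1 e2)
    _ ≤ B * dist q q' * T + M * dist q q' := by
        have u1 : B * ‖q.1 - q'.1‖ * |q.2| ≤ B * dist q q' * |q.2| :=
          mul_le_mul_of_nonneg_right (mul_le_mul_of_nonneg_left hzz hB0) (abs_nonneg _)
        have u2 : B * dist q q' * |q.2| ≤ B * dist q q' * T :=
          mul_le_mul_of_nonneg_left hq2 (by positivity)
        have u3 := mul_le_mul_of_nonneg_left htt hM0
        linarith
    _ = C * dist q q' := by rw [hCdef]; ring
    _ ≤ max 1 C * dist q q' := mul_le_mul_of_nonneg_right (le_max_right _ _) hdistnn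

lemma Psi_lip (p : ℂ × ℝ) (hp : p.1 ∈ ball (0:ℂ) 1) :
    ∃ ε > (0:ℝ), ∃ K : NNReal,
      LipschitzOnWith K
        (fun q : ℂ × ℝ => (q.1, Function.invFun (fun t => ∫ s in (0:ℝ)..t, h (q.1, s)) q.2))
        (ball p ε ∩ (ball (0:ℂ) 1 ×ˢ (univ : Set ℝ))) := by
  have hz₀ : ‖p.1‖ < 1 := mem_ball_zero_iff.1 hp
  set r : ℝ := (1 + ‖p.1‖) / 2 with hrdef
  set ε : ℝ := (1 - ‖p.1‖) / 2 with hεdef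
  have hεpos : 0 < ε := by rw [hεdef]; linarith
  have hr1 : r < 1 := by rw [hrdef]; linarith
  have hr0 : (0:ℝ) ≤ r := by rw [hrdef]; linarith [norm_nonneg p.1]
  set c : ℝ := (1 - r) / (1 + r) with hcdef
  have hcpos : 0 < c := by rw [hcdef]; exact div_pos (by linarith) (by linarith)
  set T : ℝ := (|p.2| + ε) / c with hTdef
  have hT0 : 0 ≤ T := by rw [hTdef]; positivity
  set B : ℝ := Bc r with hBdef
  have hB0 : 0 ≤ B := Bc_nonneg hr0 hr1
  set C : ℝ := (B * T + 1) / c with hCdef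
  have hC0 : 0 ≤ C := by rw [hCdef]; positivity
  refine ⟨ε, hεpos, Real.toNNReal (max 1 C), ?_⟩
  rw [lipschitzOnWith_iff_dist_le_mul]
  intro q hq q' hq'
  have hKcoe : ((Real.toNNReal (max 1 C) : NNReal) : ℝ) = max 1 C :=
    Real.coe_toNNReal _ (le_trans zero_le_one (le_max_left _ _))
  rw [hKcoe]
  have hq1 : ‖q.1‖ ≤ r := by
    have := (ball_norm_le harm pos hnorm meas hq.1).1
    rw [hrdef]; rw [hεdef] at this; linarith
  have hq'1 : ‖q'.1‖ ≤ r := by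
    have := (ball_norm_le harm pos hnorm meas hq'.1).1
    rw [hrdef]; rw [hεdef] at this; linarith
  have hqball : q.1 ∈ ball (0:ℂ) 1 := mem_ball_zero_iff.2 (lt_of_le_of_lt hq1 hr1)
  have hq'ball : q'.1 ∈ ball (0:ℂ) 1 := mem_ball_zero_iff.2 (lt_of_le_of_lt hq'1 hr1)
  have hq2 : |q.2| ≤ |p.2| + ε := (ball_norm_le harm pos hnorm meas hq.1).2
  have hdistnn : (0:ℝ) ≤ dist q q' := dist_nonneg
  -- inverse values
  set t : ℝ := Function.invFun (fun t => ∫ s in (0:ℝ)..t, h (q.1, s)) q.2 with htdef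
  set t' : ℝ := Function.invFun (fun t => ∫ s in (0:ℝ)..t, h (q'.1, s)) q'.2 with ht'def
  have hsurj := phi_surj harm pos hnorm meas hqball
  have hsurj' := phi_surj harm pos hnorm meas hq'ball
  have hu : (∫ s in (0:ℝ)..t, h (q.1, s)) = q.2 := by
    rw [htdef]; exact Function.invFun_eq (hsurj q.2)
  have hu' : (∫ s in (0:ℝ)..t', h (q'.1, s)) = q'.2 := by
    rw [ht'def]; exact Function.invFun_eq (hsurj' q'.2)
  -- bound |t| ≤ T
  have htT : |t| ≤ T := by
    have := est_inv harm pos hnorm meas hr1 hq1 t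
    rw [hu] at this
    rw [hTdef]
    rw [le_div_iff₀ hcpos]
    calc |t| * c = c * |t| := mul_comm _ _
    _ ≤ |q.2| := by rw [← hcdef] at this; exact this
    _ ≤ |p.2| + ε := hq2
  -- main estimate on |t - t'|
  have hlow := est_lower harm pos hnorm meas hr1 hq'1 t t'
  have htri : |(∫ s in (0:ℝ)..t, h (q'.1, s)) - ∫ s in (0:ℝ)..t', h (q'.1, s)|
      ≤ B * dist q q' * T + dist q q' := by
    have e1 := est_z harm pos hnorm meas hr0 hr1 hq'1 hq1 t
    have hzz : ‖q'.1 - q.1‖ ≤ dist q q' := by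
      rw [← dist_eq_norm, dist_comm]
      exact dist_comp.1
    have huu : |q.2 - q'.2| ≤ dist q q' := by
      rw [← Real.dist_eq]; exact dist_comp.2
    calc |(∫ s in (0:ℝ)..t, h (q'.1, s)) - ∫ s in (0:ℝ)..t', h (q'.1, s)|
        ≤ |(∫ s in (0:ℝ)..t, h (q'.1, s)) - ∫ s in (0:ℝ)..t, h (q.1, s)|
          + |(∫ s in (0:ℝ)..t, h (q.1, s)) - ∫ s in (0:ℝ)..t', h (q'.1, s)| := by
          have := abs_sub_le (∫ s in (0:ℝ)..t, h (q'.1, s)) (∫ s in (0:ℝ)..t, h (q.1, s))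
            (∫ s in (0:ℝ)..t', h (q'.1, s))
          linarith
    _ ≤ Bc r * ‖q'.1 - q.1‖ * |t| + |q.2 - q'.2| := by
          apply add_le_add e1
          rw [hu, hu']
    _ ≤ B * dist q q' * T + dist q q' := by
          rw [← hBdef]
          have u1 : B * ‖q'.1 - q.1‖ * |t| ≤ B * dist q q' * |t| :=
            mul_le_mul_of_nonneg_right (mul_le_mul_of_nonneg_left hzz hB0) (abs_nonneg _)
          have u2 : B * dist q q' * |t| ≤ B * dist q q' * T :=
            mul_le_mul_of_nonneg_left htT (by positivity)
          linarith
  have hmain : |t - t'| ≤ C * dist q q' := by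
    rw [hCdef, div_mul_eq_mul_div, le_div_iff₀ hcpos]
    calc |t - t'| * c = c * |t - t'| := mul_comm _ _
    _ ≤ |(∫ s in (0:ℝ)..t, h (q'.1, s)) - ∫ s in (0:ℝ)..t', h (q'.1, s)| := by
        rw [← hcdef] at hlow; exact hlow
    _ ≤ B * dist q q' * T + dist q q' := htri
    _ = (B * T + 1) * dist q q' := by ring
  have hdeq : dist ((q.1, t) : ℂ × ℝ) ((q'.1, t') : ℂ × ℝ)
      = max (dist q.1 q'.1) (dist t t') := Prod.dist_eq
  rw [hdeq]
  apply max_le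
  · calc dist q.1 q'.1 ≤ dist q q' := dist_comp.1
    _ = 1 * dist q q' := (one_mul _).symm
    _ ≤ max 1 C * dist q q' := mul_le_mul_of_nonneg_right (le_max_left _ _) hdistnn
  · rw [Real.dist_eq]
    exact hmain.trans (mul_le_mul_of_nonneg_right (le_max_right _ _) hdistnn)

end

lemma contOn_of_loclip {f : ℂ × ℝ → ℂ × ℝ} {D : Set (ℂ × ℝ)}
    (H : ∀ p ∈ D, ∃ ε > (0:ℝ), ∃ K : NNReal, LipschitzOnWith K f (ball p ε ∩ D)) :
    ContinuousOn f D := by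
  intro p hp
  obtain ⟨ε, hε, K, hK⟩ := H p hp
  have h1 : ContinuousWithinAt f (ball p ε ∩ D) p :=
    hK.continuousOn p ⟨mem_ball_self hε, hp⟩
  apply h1.mono_of_mem_nhdsWithin
  rw [inter_comm]
  exact inter_mem_nhdsWithin D (ball_mem_nhds p hε)

/-- The fiberwise-integration map `Φ(z,t) = (z, ∫₀ᵗ h(z,s) ds)` of Section 4.1:
if `h(·,t)` is a positive harmonic function on the unit disk `𝔻` normalized by
`h(0,t) = 1` for every `t`, and `h(z,·)` is measurable for every `z ∈ 𝔻`, then `Φ`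
is a bijection of `𝔻 × ℝ` onto itself which, together with its inverse, is locally
Lipschitz (in particular a homeomorphism), and `z ↦ φ(z,t)` is harmonic on `𝔻` for
every `t`. -/
theorem fiberwise_integration_locally_biLipschitz
    (h : ℂ × ℝ → ℝ)
    (harm : ∀ t : ℝ, IsHarmonicOnDisk fun z => h (z, t))
    (pos : ∀ t : ℝ, ∀ z ∈ Metric.ball (0 : ℂ) 1, 0 < h (z, t))
    (hnorm : ∀ t : ℝ, h (0, t) = 1)
    (meas : ∀ z ∈ Metric.ball (0 : ℂ) 1, Measurable fun t => h (z, t)) :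
    ∀ (D : Set (ℂ × ℝ)), D = (Metric.ball (0 : ℂ) 1) ×ˢ (Set.univ : Set ℝ) →
    ∀ (Φ : ℂ × ℝ → ℂ × ℝ), Φ = (fun p => (p.1, ∫ s in (0 : ℝ)..p.2, h (p.1, s))) →
      Set.BijOn Φ D D ∧
      (∃ Ψ : ℂ × ℝ → ℂ × ℝ,
        Set.InvOn Ψ Φ D D ∧
        ContinuousOn Φ D ∧ ContinuousOn Ψ D ∧
        (∀ p ∈ D, ∃ ε > (0 : ℝ), ∃ K : NNReal,
          LipschitzOnWith K Φ (Metric.ball p ε ∩ D)) ∧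
        (∀ p ∈ D, ∃ ε > (0 : ℝ), ∃ K : NNReal,
          LipschitzOnWith K Ψ (Metric.ball p ε ∩ D))) ∧
      (∀ t : ℝ, IsHarmonicOnDisk fun z => ∫ s in (0 : ℝ)..t, h (z, s)) := by

  intro D hD Φ hΦ
  subst hD
  subst hΦ
  classical
  set Ψ : ℂ × ℝ → ℂ × ℝ :=
    fun q => (q.1, Function.invFun (fun t => ∫ s in (0:ℝ)..t, h (q.1, s)) q.2) with hΨ
  have hmapsΦ : MapsTo (fun p : ℂ × ℝ => (p.1, ∫ s in (0:ℝ)..p.2, h (p.1, s)))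
      (ball (0:ℂ) 1 ×ˢ (univ : Set ℝ)) (ball (0:ℂ) 1 ×ˢ (univ : Set ℝ)) :=
    fun q hq => ⟨hq.1, mem_univ _⟩
  have hmapsΨ : MapsTo Ψ (ball (0:ℂ) 1 ×ˢ (univ : Set ℝ))
      (ball (0:ℂ) 1 ×ˢ (univ : Set ℝ)) := fun q hq => ⟨hq.1, mem_univ _⟩
  have hinv : InvOn Ψ (fun p : ℂ × ℝ => (p.1, ∫ s in (0:ℝ)..p.2, h (p.1, s)))
      (ball (0:ℂ) 1 ×ˢ (univ : Set ℝ)) (ball (0:ℂ) 1 ×ˢ (univ : Set ℝ)) := by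
    constructor
    · intro q hq
      have hinj := (phi_strictMono harm pos hnorm meas hq.1).injective
      have h2 : Function.invFun (fun t => ∫ s in (0:ℝ)..t, h (q.1, s))
          (∫ s in (0:ℝ)..q.2, h (q.1, s)) = q.2 := Function.leftInverse_invFun hinj q.2
      exact Prod.ext rfl h2
    · intro q hq
      have hsurj := phi_surj harm pos hnorm meas hq.1
      have h2 : (∫ s in (0:ℝ)..(Function.invFun (fun t => ∫ s in (0:ℝ)..t, h (q.1, s)) q.2),
          h (q.1, s)) = q.2 := Function.invFun_eq (hsurj q.2)
      exact Prod.ext rfl h2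
  refine ⟨hinv.bijOn hmapsΦ hmapsΨ,
    ⟨Ψ, hinv,
      contOn_of_loclip (fun p hp => Phi_lip harm pos hnorm meas p hp.1),
      contOn_of_loclip (fun p hp => Psi_lip harm pos hnorm meas p hp.1),
      fun p hp => Phi_lip harm pos hnorm meas p hp.1,
      fun p hp => Psi_lip harm pos hnorm meas p hp.1⟩,
    fun t => integral_harmonic harm pos hnorm meas t⟩
end
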